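/- Let T₁ : X → X and T₂ : X → X be firmly nonexpansive mappings such that for each i ∈ {1,2} and all x, y ∈ X the set {⟨Tᵢx − Tᵢz, (y − Tᵢy) − (z − Tᵢz)⟩ : z ∈ X} is bounded below, and set T := T₂ ∘ (2T₁ − Id) + Id − T₁. Then ran T ≃ (ran T₁ − ran(Id − T₂)) ∩ (ran(Id − T₁) + ran T₂) and ran(Id − T) ≃ (ran T₁ − ran T₂) ∩ (ran(Id − T₁) + ran(Id − T₂)). -/

import Mathlib

open Set Pointwise

/-- Two sets are nearly equal if they have the same closure and the same relative
(intrinsic) interior. -/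
def NearEq {X : Type*} [NormedAddCommGroup X] [NormedSpace ℝ X] (C D : Set X) : Prop :=
  closure C = closure D ∧ intrinsicInterior ℝ C = intrinsicInterior ℝ D

/-- A map is firmly nonexpansive if
`‖Tx - Ty‖² + ‖(x - Tx) - (y - Ty)‖² ≤ ‖x - y‖²` for all `x, y`. -/
def FirmlyNonexpansive {X : Type*} [NormedAddCommGroup X] (T : X → X) : Prop :=
  ∀ x y : X, ‖T x - T y‖ ^ 2 + ‖(x - T x) - (y - T y)‖ ^ 2 ≤ ‖x - y‖ ^ 2

/-- The boundedness condition on a firmly nonexpansive map `T`: for all `x, y` the set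
`{⟪Tx - Tz, (y - Ty) - (z - Tz)⟫ : z ∈ X}` is bounded below. -/
def BddBelowInnerCondition {X : Type*} [NormedAddCommGroup X] [InnerProductSpace ℝ X]
    (T : X → X) : Prop :=
  ∀ x y : X,
    BddBelow {r : ℝ | ∃ z : X, r = (inner ℝ (T x - T z) ((y - T y) - (z - T z)) : ℝ)}



open Filter Topology RealInnerProductSpace

set_option linter.unusedSectionVars false
set_option maxHeartbeats 1000000

section Aux

variable {X : Type*} [NormedAddCommGroup X] [InnerProductSpace ℝ X]




variable {X : Type*} [NormedAddCommGroup X] [InnerProductSpace ℝ X]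

lemma fne_expand (F : X → X) (x y : X) :
    ‖(x - F x) - (y - F y)‖ ^ 2
      = ‖x - y‖ ^ 2 - 2 * ⟪F x - F y, x - y⟫ + ‖F x - F y‖ ^ 2 := by
  have e : (x - F x) - (y - F y) = (x - y) - (F x - F y) := by abel
  rw [e, norm_sub_sq_real, real_inner_comm]

lemma fne_inner {F : X → X} (hF : FirmlyNonexpansive F) (x y : X) :
    ‖F x - F y‖ ^ 2 ≤ ⟪F x - F y, x - y⟫ := by
  have h := hF x y
  rw [fne_expand] at h
  linarith

lemma fne_of_inner {F : X → X} (h : ∀ x y, ‖F x - F y‖ ^ 2 ≤ ⟪F x - F y, x - y⟫) :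
    FirmlyNonexpansive F := by
  intro x y
  rw [fne_expand]
  linarith [h x y]

lemma fne_mono {F : X → X} (hF : FirmlyNonexpansive F) (x y : X) :
    0 ≤ ⟪F x - F y, (x - F x) - (y - F y)⟫ := by
  have e : (x - F x) - (y - F y) = (x - y) - (F x - F y) := by abel
  rw [e, inner_sub_right, real_inner_self_eq_norm_sq]
  linarith [fne_inner hF x y]

lemma fne_nonexp {F : X → X} (hF : FirmlyNonexpansive F) (x y : X) :
    ‖F x - F y‖ ≤ ‖x - y‖ := by
  have h := hF x y
  nlinarith [norm_nonneg (F x - F y), norm_nonneg (x - y), sq_nonneg ‖(x - F x) - (y - F y)‖]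

lemma fne_id_sub {F : X → X} (hF : FirmlyNonexpansive F) :
    FirmlyNonexpansive (fun x => x - F x) := by
  intro x y
  have h := hF x y
  simp only
  have e : (x - (x - F x)) - (y - (y - F y)) = F x - F y := by abel
  rw [e]
  linarith

lemma fne_max {F : X → X} {z zs : X}
    (h : ∀ x, 0 ≤ ⟪z - F x, zs - (x - F x)⟫) : F (z + zs) = z := by
  have h0 := h (z + zs)
  have e : zs - ((z + zs) - F (z + zs)) = -(z - F (z + zs)) := by abel
  rw [e, inner_neg_right, real_inner_self_eq_norm_sq] at h0
  have hn : ‖z - F (z + zs)‖ = 0 := by nlinarith [norm_nonneg (z - F (z + zs))]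
  have h2 := sub_eq_zero.mp (norm_eq_zero.mp hn)
  exact h2.symm

lemma exists_fixedPoint [CompleteSpace X] {G : X → X}
    (hG : ∀ a b, ‖G a - G b‖ ≤ ‖a - b‖) {θ : ℝ} (h0 : 0 ≤ θ) (h1 : θ < 1) (v : X) :
    ∃ c, c = θ • G c + v := by
  set f : X → X := fun c => θ • G c + v with hf
  have hlip : LipschitzWith ⟨θ, h0⟩ f := by
    apply LipschitzWith.of_dist_le_mul
    intro a b
    simp only [hf, dist_eq_norm]
    have e : θ • G a + v - (θ • G b + v) = θ • (G a - G b) := by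
      rw [smul_sub]; abel
    rw [e, norm_smul, Real.norm_eq_abs, abs_of_nonneg h0]
    have := hG a b
    push_cast
    exact mul_le_mul_of_nonneg_left this h0
  have hcw : ContractingWith ⟨θ, h0⟩ f := ⟨by exact_mod_cast h1, hlip⟩
  haveI : Nonempty X := ⟨v⟩
  exact ⟨hcw.fixedPoint f, (hcw.fixedPoint_isFixedPt).symm⟩

lemma bh_mem_closure [FiniteDimensional ℝ X] {F : X → X} (hF : FirmlyNonexpansive F)
    {w y : X} {K : ℝ} (hK : ∀ x, ⟪w - (x - F x), F x - y⟫ ≤ K) :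
    w ∈ closure (Set.range fun x => x - F x) := by
  rw [Metric.mem_closure_iff]
  intro ε hε
  set M : ℝ := max K 1 with hM
  have hMpos : 0 < M := lt_of_lt_of_le one_pos (le_max_right _ _)
  set lam : ℝ := min 1 (ε ^ 2 / (2 * M)) with hlam
  have hlam_pos : 0 < lam := lt_min one_pos (by positivity)
  have hlam_le1 : lam ≤ 1 := min_le_left _ _
  obtain ⟨c, hc⟩ := exists_fixedPoint (fne_nonexp hF) (θ := 1 - lam)
    (by linarith) (by linarith) (w + lam • y)
  have key : w - (c - F c) = lam • (F c - y) := by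
    have h2 := congrArg (fun u => u - F c) hc
    rw [h2]
    module
  have hKc := hK c
  rw [key, real_inner_smul_left, real_inner_self_eq_norm_sq] at hKc
  refine ⟨c - F c, ⟨c, rfl⟩, ?_⟩
  rw [dist_eq_norm, key, norm_smul, Real.norm_eq_abs, abs_of_nonneg hlam_pos.le]
  have hKnn : 0 ≤ lam * ‖F c - y‖ ^ 2 := by positivity
  have hK0 : 0 ≤ K := le_trans hKnn hKc
  have hlam2 : lam ≤ ε ^ 2 / (2 * M) := min_le_right _ _
  have hKM : K ≤ M := le_max_left _ _
  -- (lam * ‖F c - y‖)^2 = lam * (lam * ‖Fc-y‖^2) ≤ lam * K ≤ ε^2/2 < ε^2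
  have hsq : (lam * ‖F c - y‖) ^ 2 ≤ ε ^ 2 / 2 := by
    have h1 : (lam * ‖F c - y‖) ^ 2 = lam * (lam * ‖F c - y‖ ^ 2) := by ring
    have h2 : lam * (lam * ‖F c - y‖ ^ 2) ≤ lam * K :=
      mul_le_mul_of_nonneg_left hKc hlam_pos.le
    have h3 : lam * K ≤ (ε ^ 2 / (2 * M)) * K := mul_le_mul_of_nonneg_right hlam2 hK0
    have h4 : (ε ^ 2 / (2 * M)) * K ≤ ε ^ 2 / 2 := by
      rw [div_mul_eq_mul_div, div_le_div_iff₀ (by positivity) two_pos]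
      nlinarith
    linarith
  nlinarith [mul_nonneg hlam_pos.le (norm_nonneg (F c - y))]

lemma ri_closure_range_subset [FiniteDimensional ℝ X] {F : X → X}
    (hF : FirmlyNonexpansive F) :
    intrinsicInterior ℝ (closure (Set.range F)) ⊆ Set.range F := by
  intro z hz
  have hzC : z ∈ closure (Set.range F) := intrinsicInterior_subset hz
  set lam : ℕ → ℝ := fun n => 1 / (n + 1) with hlamdef
  have hlam_pos : ∀ n, 0 < lam n := fun n => by positivity
  have hlam_le1 : ∀ n, lam n ≤ 1 := fun n => by
    rw [hlamdef]; simp only; rw [div_le_one (by positivity)]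
    linarith [Nat.cast_nonneg (α := ℝ) n]
  have hlam_to : Tendsto lam atTop (𝓝 0) := tendsto_one_div_add_atTop_nhds_zero_nat
  have hex : ∀ n : ℕ, ∃ c, c = (1 - lam n) • (c - F c) + z := fun n =>
    exists_fixedPoint (G := fun x => x - F x) (fne_nonexp (fne_id_sub hF))
      (by linarith [hlam_le1 n]) (by linarith [hlam_pos n]) z
  choose c hc using hex
  set x : ℕ → X := fun n => F (c n) with hxdef
  set ms : ℕ → X := fun n => c n - F (c n) with hmsdef
  have hkey : ∀ n, z - x n = lam n • ms n := by
    intro n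
    have h3 : c n - ((1 - lam n) • (c n - F (c n)) + z) = 0 := sub_eq_zero.mpr (hc n)
    have h4 : z - x n - lam n • ms n
        = -(c n - ((1 - lam n) • (c n - F (c n)) + z)) := by
      simp only [hxdef, hmsdef]; module
    have h5 : z - x n - lam n • ms n = 0 := by rw [h4, h3, neg_zero]
    exact sub_eq_zero.mp h5
  have hmono : ∀ n x', 0 ≤ ⟪x n - F x', ms n - (x' - F x')⟫ := fun n x' => fne_mono hF (c n) x'
  have hxz : Tendsto x atTop (𝓝 z) := by
    rw [Metric.tendsto_atTop]
    intro ε hε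
    obtain ⟨pt, hptmem, hpt⟩ := Metric.mem_closure_iff.1 hzC (ε / 4) (by positivity)
    obtain ⟨p, rfl⟩ := hptmem
    have hbnd : ∀ n, ‖x n - F p‖ ≤ ‖z - F p‖ + lam n * ‖p - F p‖ := by
      intro n
      have h0 := hmono n p
      have h1 : 0 ≤ ⟪x n - F p, (z - x n) - lam n • (p - F p)⟫ := by
        have e1 : (z - x n) - lam n • (p - F p) = lam n • (ms n - (p - F p)) := by
          rw [hkey n]; simp only [hmsdef]; module
        rw [e1, real_inner_smul_right]
        exact mul_nonneg (hlam_pos n).le h0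
      have h2 : ‖x n - F p‖ ^ 2 ≤ ⟪x n - F p, (z - F p) - lam n • (p - F p)⟫ := by
        have e2 : (z - F p) - lam n • (p - F p)
            = ((z - x n) - lam n • (p - F p)) + (x n - F p) := by abel
        rw [e2, inner_add_right, real_inner_self_eq_norm_sq]
        linarith
      have h3 : ⟪x n - F p, (z - F p) - lam n • (p - F p)⟫
          ≤ ‖x n - F p‖ * (‖z - F p‖ + lam n * ‖p - F p‖) := by
        refine le_trans (real_inner_le_norm _ _) ?_
        refine mul_le_mul_of_nonneg_left ?_ (norm_nonneg _)
        refine le_trans (norm_sub_le _ _) ?_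
        rw [norm_smul, Real.norm_eq_abs, abs_of_pos (hlam_pos n)]
      nlinarith [norm_nonneg (x n - F p), norm_nonneg (z - F p),
        mul_nonneg (hlam_pos n).le (norm_nonneg (p - F p))]
    have htnd : Tendsto (fun n => lam n * ‖p - F p‖) atTop (𝓝 0) := by
      have h := hlam_to.mul_const ‖p - F p‖
      rw [zero_mul] at h
      exact h
    rw [Metric.tendsto_atTop] at htnd
    obtain ⟨N, hN⟩ := htnd (ε / 4) (by positivity)
    refine ⟨N, fun n hn => ?_⟩
    have hN' := hN n hn
    rw [Real.dist_eq, sub_zero] at hN'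
    have habs : lam n * ‖p - F p‖ < ε / 4 := lt_of_le_of_lt (le_abs_self _) hN'
    have htri : dist (x n) z ≤ ‖x n - F p‖ + ‖F p - z‖ := by
      rw [dist_eq_norm]
      have : x n - z = (x n - F p) + (F p - z) := by abel
      rw [this]; exact norm_add_le _ _
    have h6 : ‖z - F p‖ < ε / 4 := by rw [← dist_eq_norm]; exact hpt
    have h5 : ‖F p - z‖ < ε / 4 := by rw [← dist_eq_norm, dist_comm]; exact hpt
    calc dist (x n) z ≤ ‖x n - F p‖ + ‖F p - z‖ := htri
      _ ≤ (‖z - F p‖ + lam n * ‖p - F p‖) + ‖F p - z‖ := by linarith [hbnd n]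
      _ < ε := by linarith
  -- compact extraction
  set t : ℕ → ℝ := fun n => (1 + ‖ms n‖)⁻¹ with htdef
  have htpos : ∀ n, 0 < t n := fun n => by positivity
  have htle : ∀ n, t n ≤ 1 := by
    intro n
    rw [htdef]
    simp only
    rw [inv_le_one_iff₀]
    right; linarith [norm_nonneg (ms n)]
  have htnorm : ∀ n, t n * ‖ms n‖ = 1 - t n := by
    intro n
    rw [htdef]
    simp only
    have hne : (1 : ℝ) + ‖ms n‖ ≠ 0 := by positivity
    field_simp
    ring
  set e : ℕ → X := fun n => t n • ms n with hedef
  have hemem : ∀ n, e n ∈ Metric.closedBall (0 : X) 1 := by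
    intro n
    rw [Metric.mem_closedBall, dist_zero_right, hedef]
    simp only
    rw [norm_smul, Real.norm_eq_abs, abs_of_pos (htpos n), htnorm n]
    linarith [htpos n]
  obtain ⟨ebar, hebarmem, φ₁, hφ₁, hcon₁⟩ :=
    (isCompact_closedBall (0 : X) 1).tendsto_subseq hemem
  obtain ⟨τ, hτmem, φ₂, hφ₂, hcon₂⟩ :=
    (isCompact_Icc (a := (0:ℝ)) (b := 1)).tendsto_subseq
      (x := fun k => t (φ₁ k)) (fun k => ⟨(htpos _).le, htle _⟩)
  set φ : ℕ → ℕ := φ₁ ∘ φ₂ with hφdef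
  have hφmono : StrictMono φ := hφ₁.comp hφ₂
  have heast : Tendsto (fun k => e (φ k)) atTop (𝓝 ebar) := hcon₁.comp hφ₂.tendsto_atTop
  have htt : Tendsto (fun k => t (φ k)) atTop (𝓝 τ) := hcon₂
  have hxφ : Tendsto (fun k => x (φ k)) atTop (𝓝 z) := hxz.comp hφmono.tendsto_atTop
  by_cases hτ0 : τ = 0
  · exfalso
    have hne : ∀ n, ‖e n‖ = 1 - t n := by
      intro n
      rw [hedef]; simp only
      rw [norm_smul, Real.norm_eq_abs, abs_of_pos (htpos n)]
      exact htnorm n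
    have hebar1 : ‖ebar‖ = 1 := by
      have l1 : Tendsto (fun k => ‖e (φ k)‖) atTop (𝓝 ‖ebar‖) := heast.norm
      have l2 : Tendsto (fun k => ‖e (φ k)‖) atTop (𝓝 1) := by
        simp_rw [hne]
        have : Tendsto (fun k => 1 - t (φ k)) atTop (𝓝 (1 - τ)) :=
          tendsto_const_nhds.sub htt
        rw [hτ0, sub_zero] at this
        exact this
      exact tendsto_nhds_unique l1 l2
    set A := affineSpan ℝ (closure (Set.range F)) with hA
    have hzA : z ∈ A := subset_affineSpan ℝ _ hzC
    have hmsdir : ∀ n, ms n ∈ A.direction := by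
      intro n
      have h1 : z - x n ∈ A.direction := by
        have h2 := AffineSubspace.vsub_mem_direction hzA
          (subset_affineSpan ℝ _ (subset_closure ⟨c n, rfl⟩))
        simpa [vsub_eq_sub] using h2
      have h2 : ms n = (lam n)⁻¹ • (z - x n) := by
        rw [hkey n, smul_smul, inv_mul_cancel₀ (hlam_pos n).ne', one_smul]
      rw [h2]; exact Submodule.smul_mem _ _ h1
    have hedir : ∀ n, e n ∈ A.direction := fun n => Submodule.smul_mem _ _ (hmsdir n)
    have hebardir : ebar ∈ A.direction := by
      have hcl : IsClosed (A.direction : Set X) := Submodule.closed_of_finiteDimensional _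
      exact hcl.mem_of_tendsto heast (Filter.Eventually.of_forall fun k => hedir (φ k))
    have htt0 : Tendsto (fun k => t (φ k)) atTop (𝓝 (0:ℝ)) := hτ0 ▸ htt
    have hpos : ∀ x', 0 ≤ ⟪z - F x', ebar⟫ := by
      intro x'
      have hstep : ∀ k, 0 ≤ ⟪x (φ k) - F x', e (φ k) - t (φ k) • (x' - F x')⟫ := by
        intro k
        have h0 := hmono (φ k) x'
        have e1 : e (φ k) - t (φ k) • (x' - F x') = t (φ k) • (ms (φ k) - (x' - F x')) := by
          rw [hedef]; simp only [smul_sub]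
        rw [e1, real_inner_smul_right]
        exact mul_nonneg (htpos _).le h0
      have hlim : Tendsto (fun k => ⟪x (φ k) - F x', e (φ k) - t (φ k) • (x' - F x')⟫) atTop
          (𝓝 ⟪z - F x', ebar - (0:ℝ) • (x' - F x')⟫) :=
        Filter.Tendsto.inner (hxφ.sub tendsto_const_nhds)
          (heast.sub (htt0.smul_const _))
      have := ge_of_tendsto' hlim hstep
      simpa using this
    rw [mem_intrinsicInterior] at hz
    obtain ⟨y', hy'int, hy'eq⟩ := hz
    rw [mem_interior_iff_mem_nhds, Metric.mem_nhds_iff] at hy'int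
    obtain ⟨ε, hεpos, hball⟩ := hy'int
    set wv : X := z + (ε / 2) • ebar with hwv
    have hwA : wv ∈ affineSpan ℝ (closure (Set.range F)) := by
      have h1 := AffineSubspace.vadd_mem_of_mem_direction
        (Submodule.smul_mem A.direction (ε / 2) hebardir) hzA
      have h2 : (ε / 2) • ebar +ᵥ z = wv := by rw [hwv, vadd_eq_add, add_comm]
      rw [h2] at h1
      exact h1
    have hwball : (⟨wv, hwA⟩ : affineSpan ℝ (closure (Set.range F))) ∈ Metric.ball y' ε := by
      rw [Metric.mem_ball, Subtype.dist_eq]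
      show dist wv (y' : X) < ε
      rw [hy'eq, dist_eq_norm]
      have h3 : wv - z = (ε / 2) • ebar := by rw [hwv]; abel
      rw [h3, norm_smul, Real.norm_eq_abs, abs_of_pos (by positivity), hebar1, mul_one]
      linarith
    have hwC : wv ∈ closure (Set.range F) := hball hwball
    have hcl2 : ∀ m ∈ closure (Set.range F), 0 ≤ ⟪z - m, ebar⟫ := by
      intro m hm
      have hclosed : IsClosed {m : X | 0 ≤ ⟪z - m, ebar⟫} :=
        isClosed_le continuous_const
          (Continuous.inner (continuous_const.sub continuous_id) continuous_const)
      refine closure_minimal ?_ hclosed hm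
      rintro _ ⟨x', rfl⟩
      exact hpos x'
    have hcontr := hcl2 wv hwC
    have h4 : z - wv = -((ε / 2) • ebar) := by rw [hwv]; abel
    rw [h4, inner_neg_left, real_inner_smul_left, real_inner_self_eq_norm_sq, hebar1] at hcontr
    norm_num at hcontr
    linarith
  · have hmslim : Tendsto (fun k => ms (φ k)) atTop (𝓝 (τ⁻¹ • ebar)) := by
      have h1 : ∀ k, ms (φ k) = (t (φ k))⁻¹ • e (φ k) := by
        intro k
        rw [hedef]; simp only
        rw [smul_smul, inv_mul_cancel₀ (htpos _).ne', one_smul]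
      simp_rw [h1]
      exact Tendsto.smul (htt.inv₀ hτ0) heast
    have hfin : ∀ x', 0 ≤ ⟪z - F x', τ⁻¹ • ebar - (x' - F x')⟫ := by
      intro x'
      have hlim := Filter.Tendsto.inner (𝕜 := ℝ) (hxφ.sub (tendsto_const_nhds (x := F x')))
        (hmslim.sub (tendsto_const_nhds (x := x' - F x')))
      exact ge_of_tendsto' hlim (fun k => hmono (φ k) x')
    exact ⟨z + τ⁻¹ • ebar, fne_max hfin⟩


end Aux

section Aux2

variable {X : Type*} [NormedAddCommGroup X] [NormedSpace ℝ X]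

lemma affineSpan_closure_eq [FiniteDimensional ℝ X] (Q : Set X) :
    affineSpan ℝ Q = affineSpan ℝ (closure Q) := by
  refine le_antisymm (affineSpan_mono ℝ subset_closure) ?_
  rw [affineSpan_le]
  have h1 : closure Q ⊆ closure (affineSpan ℝ Q : Set X) :=
    closure_mono (subset_affineSpan ℝ Q)
  rwa [IsClosed.closure_eq ((affineSpan ℝ Q).closed_of_finiteDimensional)] at h1

lemma intrinsicInterior_eq_of_closure [FiniteDimensional ℝ X] {Q : Set X}
    (h : intrinsicInterior ℝ (closure Q) ⊆ Q) :
    intrinsicInterior ℝ Q = intrinsicInterior ℝ (closure Q) := by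
  have hspan := affineSpan_closure_eq Q
  unfold intrinsicInterior at h ⊢
  rw [hspan]
  apply Set.Subset.antisymm
  · exact Set.image_mono (interior_mono (Set.preimage_mono subset_closure))
  · intro u hu
    obtain ⟨v, hv, rfl⟩ := hu
    refine ⟨v, ?_, rfl⟩
    have hUQ : interior ((↑) ⁻¹' closure Q :
        Set (affineSpan ℝ (closure Q))) ⊆ (↑) ⁻¹' Q := by
      intro a ha
      exact h ⟨a, ha, rfl⟩
    exact interior_maximal hUQ isOpen_interior hv

lemma nearEq_of_sandwich [FiniteDimensional ℝ X] {S D : Set X}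
    (h1 : S ⊆ D) (h2 : D ⊆ closure S)
    (h3 : intrinsicInterior ℝ (closure S) ⊆ S) : NearEq S D := by
  have hcl : closure S = closure D := by
    refine Set.Subset.antisymm (closure_mono h1) ?_
    have := closure_mono h2
    rwa [closure_closure] at this
  constructor
  · exact hcl
  · have e1 := intrinsicInterior_eq_of_closure h3
    have h3' : intrinsicInterior ℝ (closure D) ⊆ D := by
      rw [← hcl]
      exact fun a ha => h1 (h3 ha)
    have e2 := intrinsicInterior_eq_of_closure h3'
    rw [e1, e2, hcl]


end Aux2

section Aux3

variable {X : Type*} [NormedAddCommGroup X] [InnerProductSpace ℝ X]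

lemma helperA (d pv qv P Q : X) (h1 : d = pv - qv) (h2 : d = P + Q) :
    ⟪d, -(P + qv)⟫ = ⟪pv, -P⟫ + ⟪qv, -Q⟫ := by
  have e1 : ⟪d, P⟫ = ⟪pv, P⟫ - ⟪qv, P⟫ := by rw [h1, inner_sub_left]
  have e2 : ⟪d, qv⟫ = ⟪P, qv⟫ + ⟪Q, qv⟫ := by rw [h2, inner_add_left]
  rw [inner_neg_right, inner_add_right, inner_neg_right, inner_neg_right]
  linarith [real_inner_comm qv P, real_inner_comm Q qv]

lemma helperB (d pv qv P Q : X) (h1 : d = P + qv) (h2 : d = pv - Q) :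
    ⟪d, qv - pv⟫ = ⟪pv, -P⟫ + ⟪qv, -Q⟫ := by
  have e1 : ⟪d, qv⟫ = ⟪pv, qv⟫ - ⟪Q, qv⟫ := by rw [h2, inner_sub_left]
  have e2 : ⟪d, pv⟫ = ⟪P, pv⟫ + ⟪qv, pv⟫ := by rw [h1, inner_add_left]
  rw [inner_sub_right, inner_neg_right, inner_neg_right]
  linarith [real_inner_comm pv qv, real_inner_comm P pv, real_inner_comm Q qv]

lemma helperC (dA dAs dB dBs : X) (h : dBs = dA - dAs - dB) :
    ⟪dAs + dB, dA - dB⟫ = ⟪dA, dAs⟫ + ⟪dB, dBs⟫ := by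
  rw [h]
  simp only [inner_add_left, inner_sub_right, inner_sub_left]
  linarith [real_inner_comm dA dAs, real_inner_comm dB dAs, real_inner_comm dB dA]

lemma DR_fne {T₁ T₂ T : X → X} (hT₁ : FirmlyNonexpansive T₁) (hT₂ : FirmlyNonexpansive T₂)
    (hT : ∀ x : X, T x = T₂ ((2 : ℝ) • T₁ x - x) + x - T₁ x) : FirmlyNonexpansive T := by
  apply fne_of_inner
  intro x y
  have key : 0 ≤ ⟪T x - T y, (x - y) - (T x - T y)⟫ := by
    have hdBs : (((2:ℝ) • T₁ x - x) - T₂ ((2:ℝ) • T₁ x - x))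
          - (((2:ℝ) • T₁ y - y) - T₂ ((2:ℝ) • T₁ y - y))
        = (T₁ x - T₁ y) - ((x - T₁ x) - (y - T₁ y))
          - (T₂ ((2:ℝ) • T₁ x - x) - T₂ ((2:ℝ) • T₁ y - y)) := by module
    have h1 : T x - T y = ((x - T₁ x) - (y - T₁ y))
        + (T₂ ((2:ℝ) • T₁ x - x) - T₂ ((2:ℝ) • T₁ y - y)) := by
      rw [hT x, hT y]; module
    have h2 : (x - y) - (T x - T y) = (T₁ x - T₁ y)
        - (T₂ ((2:ℝ) • T₁ x - x) - T₂ ((2:ℝ) • T₁ y - y)) := by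
      rw [hT x, hT y]; module
    rw [h2, h1, helperC _ _ _ _ hdBs]
    have m1 := fne_mono hT₁ x y
    have m2 := fne_mono hT₂ ((2:ℝ) • T₁ x - x) ((2:ℝ) • T₁ y - y)
    linarith
  rw [inner_sub_right, real_inner_self_eq_norm_sq] at key
  linarith


end Aux3

/-- For firmly nonexpansive `T₁, T₂` satisfying the boundedness condition, with
`T = T₂ ∘ (2T₁ - Id) + Id - T₁`:
`ran T ≃ (ran T₁ - ran (Id - T₂)) ∩ (ran (Id - T₁) + ran T₂)` and
`ran (Id - T) ≃ (ran T₁ - ran T₂) ∩ (ran (Id - T₁) + ran (Id - T₂))`. -/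
theorem ran_comp_firmlyNonexpansive_nearEq {X : Type*} [NormedAddCommGroup X]
    [InnerProductSpace ℝ X] [FiniteDimensional ℝ X] (T₁ T₂ : X → X)
    (hT₁ : FirmlyNonexpansive T₁) (hT₂ : FirmlyNonexpansive T₂)
    (hb₁ : BddBelowInnerCondition T₁) (hb₂ : BddBelowInnerCondition T₂)
    (T : X → X) (hT : ∀ x : X, T x = T₂ ((2 : ℝ) • T₁ x - x) + x - T₁ x) :
    NearEq (Set.range T)
        ((Set.range T₁ - Set.range (fun x => x - T₂ x)) ∩
          (Set.range (fun x => x - T₁ x) + Set.range T₂)) ∧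
      NearEq (Set.range fun x => x - T x)
        ((Set.range T₁ - Set.range T₂) ∩
          (Set.range (fun x => x - T₁ x) + Set.range (fun x => x - T₂ x))) := by
  have hTfne : FirmlyNonexpansive T := DR_fne hT₁ hT₂ hT
  constructor
  · refine nearEq_of_sandwich ?_ ?_ (ri_closure_range_subset hTfne)
    · rintro _ ⟨x, rfl⟩
      constructor
      · rw [Set.mem_sub]
        refine ⟨T₁ x, ⟨x, rfl⟩, ((2:ℝ) • T₁ x - x) - T₂ ((2:ℝ) • T₁ x - x),
          ⟨(2:ℝ) • T₁ x - x, rfl⟩, ?_⟩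
        rw [hT x]; module
      · rw [Set.mem_add]
        refine ⟨x - T₁ x, ⟨x, rfl⟩, T₂ ((2:ℝ) • T₁ x - x),
          ⟨(2:ℝ) • T₁ x - x, rfl⟩, ?_⟩
        rw [hT x]; module
    · intro w hw
      obtain ⟨hw1, hw2⟩ := hw
      rw [Set.mem_sub] at hw1
      rw [Set.mem_add] at hw2
      obtain ⟨u1, ⟨p, rfl⟩, u2, ⟨q, rfl⟩, huv⟩ := hw1
      obtain ⟨u3, ⟨r, rfl⟩, u4, ⟨s, rfl⟩, husv⟩ := hw2
      simp only at huv husv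
      obtain ⟨L₁, hL₁⟩ := hb₁ p r
      obtain ⟨L₂, hL₂⟩ := hb₂ s q
      have hrange : (Set.range fun x : X => x - (x - T x)) = Set.range T := by
        apply Set.ext; intro u
        constructor
        · rintro ⟨x, rfl⟩; exact ⟨x, (sub_sub_cancel x (T x)).symm⟩
        · rintro ⟨x, rfl⟩; exact ⟨x, sub_sub_cancel x (T x)⟩
      rw [← hrange]
      refine bh_mem_closure (fne_id_sub hTfne) (y := T₁ p - T₂ s) (K := -L₁ + -L₂) ?_
      intro x
      simp only [sub_sub_cancel]
      have hd1 : w - T x = ((r - T₁ r) - (x - T₁ x))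
          + (T₂ s - T₂ ((2:ℝ) • T₁ x - x)) := by
        rw [← husv, hT x]; module
      have hd2 : w - T x = (T₁ p - T₁ x)
          - ((q - T₂ q) - (((2:ℝ) • T₁ x - x) - T₂ ((2:ℝ) • T₁ x - x))) := by
        rw [← huv, hT x]; module
      have hmy : (x - T x) - (T₁ p - T₂ s)
          = (T₂ s - T₂ ((2:ℝ) • T₁ x - x)) - (T₁ p - T₁ x) := by
        rw [hT x]; module
      rw [hmy, helperB _ _ _ _ _ hd1 hd2]
      have hm1 : L₁ ≤ (inner ℝ (T₁ p - T₁ x) ((r - T₁ r) - (x - T₁ x)) : ℝ) := hL₁ ⟨x, rfl⟩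
      have hm2 : L₂ ≤ (inner ℝ (T₂ s - T₂ ((2:ℝ) • T₁ x - x))
          ((q - T₂ q) - (((2:ℝ) • T₁ x - x) - T₂ ((2:ℝ) • T₁ x - x))) : ℝ) :=
        hL₂ ⟨(2:ℝ) • T₁ x - x, rfl⟩
      rw [inner_neg_right, inner_neg_right]
      linarith
  · refine nearEq_of_sandwich ?_ ?_ (ri_closure_range_subset (fne_id_sub hTfne))
    · rintro _ ⟨x, rfl⟩
      constructor
      · rw [Set.mem_sub]
        refine ⟨T₁ x, ⟨x, rfl⟩, T₂ ((2:ℝ) • T₁ x - x),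
          ⟨(2:ℝ) • T₁ x - x, rfl⟩, ?_⟩
        simp only
        rw [hT x]; module
      · rw [Set.mem_add]
        refine ⟨x - T₁ x, ⟨x, rfl⟩, ((2:ℝ) • T₁ x - x) - T₂ ((2:ℝ) • T₁ x - x),
          ⟨(2:ℝ) • T₁ x - x, rfl⟩, ?_⟩
        simp only
        rw [hT x]; module
    · intro w hw
      obtain ⟨hw1, hw2⟩ := hw
      rw [Set.mem_sub] at hw1
      rw [Set.mem_add] at hw2
      obtain ⟨u1, ⟨p, rfl⟩, u2, ⟨q, rfl⟩, huv⟩ := hw1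
      obtain ⟨u3, ⟨r, rfl⟩, u4, ⟨s, rfl⟩, husv⟩ := hw2
      simp only at huv husv
      obtain ⟨L₁, hL₁⟩ := hb₁ p r
      obtain ⟨L₂, hL₂⟩ := hb₂ q s
      refine bh_mem_closure hTfne (y := (r - T₁ r) + T₂ q) (K := -L₁ + -L₂) ?_
      intro x
      have hd1 : w - (x - T x) = (T₁ p - T₁ x) - (T₂ q - T₂ ((2:ℝ) • T₁ x - x)) := by
        rw [← huv, hT x]; module
      have hd2 : w - (x - T x) = ((r - T₁ r) - (x - T₁ x))
          + ((s - T₂ s) - (((2:ℝ) • T₁ x - x) - T₂ ((2:ℝ) • T₁ x - x))) := by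
        rw [← husv, hT x]; module
      have hmy : T x - ((r - T₁ r) + T₂ q)
          = -((((r - T₁ r) - (x - T₁ x))) + (T₂ q - T₂ ((2:ℝ) • T₁ x - x))) := by
        rw [hT x]; module
      rw [hmy, helperA _ _ _ _ _ hd1 hd2]
      have hm1 : L₁ ≤ (inner ℝ (T₁ p - T₁ x) ((r - T₁ r) - (x - T₁ x)) : ℝ) := hL₁ ⟨x, rfl⟩
      have hm2 : L₂ ≤ (inner ℝ (T₂ q - T₂ ((2:ℝ) • T₁ x - x))
          ((s - T₂ s) - (((2:ℝ) • T₁ x - x) - T₂ ((2:ℝ) • T₁ x - x))) : ℝ) :=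
        hL₂ ⟨(2:ℝ) • T₁ x - x, rfl⟩
      rw [inner_neg_right, inner_neg_right]
      linarith
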